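/- In the two-contour setting, the operator Ω⁻ = ∫₀¹ γ'(t) · ((H⁺)* − γ(t))⁻¹ ∘ K(γ(t)) ∘ (H⁻ − γ(t))⁻¹ dt satisfies ‖Ω⁻‖ < 1, and likewise Ω⁺ = ∫₀¹ conj(γ'(t)) · ((H⁻)* − conj(γ(t)))⁻¹ ∘ K(conj(γ(t))) ∘ (H⁺ − conj(γ(t)))⁻¹ dt satisfies ‖Ω⁺‖ < 1. -/

import Mathlib

open MeasureTheory Metric Set

noncomputable section

variable {H : Type*} [NormedAddCommGroup H] [InnerProductSpace ℂ H] [CompleteSpace H]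

/-- `d₀ = inf_{t ∈ [0,1]} dist (γ t, σ(A))`. -/
noncomputable def curveDist (A : H →L[ℂ] H) (γ : ℝ → ℂ) : ℝ :=
  ⨅ t : Set.Icc (0 : ℝ) 1, Metric.infDist (γ t) (spectrum ℂ A)

/-- `V₀ = ∫₀¹ |γ'(t)| ‖K(γ(t))‖ dt`. -/
noncomputable def curveVar (K : ℂ → H →L[ℂ] H) (γ : ℝ → ℂ) : ℝ :=
  ∫ t in (0:ℝ)..1, ‖derivWithin γ (Set.Icc 0 1) t‖ * ‖K (γ t)‖

/-- `V(Y) = ∫₀¹ γ'(t) • K(γ(t)) ∘ (Y − γ(t))⁻¹ dt` (Bochner integral in `B(H)`). -/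
noncomputable def Vmap (K : ℂ → H →L[ℂ] H) (γ : ℝ → ℂ) (Y : H →L[ℂ] H) : H →L[ℂ] H :=
  ∫ t in (0:ℝ)..1, derivWithin γ (Set.Icc 0 1) t •
    (K (γ t) ∘L Ring.inverse (Y - γ t • (1 : H →L[ℂ] H)))

/-- `r_min = d₀/2 − √(d₀²/4 − V₀)`. -/
noncomputable def rMin (A : H →L[ℂ] H) (K : ℂ → H →L[ℂ] H) (γ : ℝ → ℂ) : ℝ :=
  curveDist A γ / 2 - Real.sqrt ((curveDist A γ) ^ 2 / 4 - curveVar K γ)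

/-- `V₁(z) = ∫₀¹ γ'(t) (z − γ(t))⁻¹ • K(γ(t)) dt`. -/
noncomputable def V1 (K : ℂ → H →L[ℂ] H) (γ : ℝ → ℂ) (z : ℂ) : H →L[ℂ] H :=
  ∫ t in (0:ℝ)..1, (derivWithin γ (Set.Icc 0 1) t * (z - γ t)⁻¹) • K (γ t)

/-- The continued transfer function `M(z) = A − z + V₁(z)`. -/
noncomputable def Mfun (A : H →L[ℂ] H) (K : ℂ → H →L[ℂ] H) (γ : ℝ → ℂ) (z : ℂ) :
    H →L[ℂ] H :=
  A - z • (1 : H →L[ℂ] H) + V1 K γ z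

/-- `Ω⁻ = ∫₀¹ γ'(t) • ((H⁺)* − γ(t))⁻¹ ∘ K(γ(t)) ∘ (H⁻ − γ(t))⁻¹ dt`. -/
noncomputable def OmegaMinus (K : ℂ → H →L[ℂ] H) (γ : ℝ → ℂ) (Hm Hp : H →L[ℂ] H) :
    H →L[ℂ] H :=
  ∫ t in (0:ℝ)..1, derivWithin γ (Set.Icc 0 1) t •
    (Ring.inverse (ContinuousLinearMap.adjoint Hp - γ t • (1 : H →L[ℂ] H)) ∘L
      K (γ t) ∘L Ring.inverse (Hm - γ t • (1 : H →L[ℂ] H)))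

/-- `Ω⁺ = ∫₀¹ conj γ'(t) • ((H⁻)* − conj γ(t))⁻¹ ∘ K(conj γ(t)) ∘ (H⁺ − conj γ(t))⁻¹ dt`. -/
noncomputable def OmegaPlus (K : ℂ → H →L[ℂ] H) (γ : ℝ → ℂ) (Hm Hp : H →L[ℂ] H) :
    H →L[ℂ] H :=
  ∫ t in (0:ℝ)..1, (starRingEnd ℂ) (derivWithin γ (Set.Icc 0 1) t) •
    (Ring.inverse (ContinuousLinearMap.adjoint Hm -
        (starRingEnd ℂ) (γ t) • (1 : H →L[ℂ] H)) ∘L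
      K ((starRingEnd ℂ) (γ t)) ∘L
      Ring.inverse (Hp - (starRingEnd ℂ) (γ t) • (1 : H →L[ℂ] H)))


lemma aux_starNormal (A : H →L[ℂ] H) (hA : IsSelfAdjoint A) (z : ℂ) :
    IsStarNormal (A - z • (1 : H →L[ℂ] H)) := by
  constructor
  have h1 : star (A - z • (1 : H →L[ℂ] H)) = A - (starRingEnd ℂ z) • 1 := by
    simp [star_sub, star_smul, hA.star_eq, Complex.star_def]
  rw [h1]
  show (A - (starRingEnd ℂ z) • 1) * (A - z • 1) = (A - z • 1) * (A - (starRingEnd ℂ z) • 1)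
  simp only [sub_mul, mul_sub, smul_mul_assoc, mul_smul_comm, one_mul, mul_one, smul_smul,
    smul_sub]
  rw [mul_comm (starRingEnd ℂ z) z]
  abel

lemma aux_resolvent (A : H →L[ℂ] H) (hA : IsSelfAdjoint A) (z : ℂ) (d : ℝ)
    (hd : 0 < d) (hdist : ∀ μ ∈ spectrum ℂ A, d ≤ ‖z - μ‖) :
    IsUnit (A - z • (1 : H →L[ℂ] H)) ∧
      ‖Ring.inverse (A - z • (1 : H →L[ℂ] H))‖ ≤ d⁻¹ := by
  have hz : z ∉ spectrum ℂ A := by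
    intro hz
    have := hdist z hz
    simp at this
    linarith
  have hu : IsUnit (A - z • (1 : H →L[ℂ] H)) := by
    have h := spectrum.notMem_iff.mp hz
    rw [Algebra.algebraMap_eq_smul_one] at h
    simpa [neg_sub] using h.neg
  refine ⟨hu, ?_⟩
  obtain ⟨u, hu'⟩ := hu
  haveI hna : IsStarNormal ((u : H →L[ℂ] H)) := hu' ▸ aux_starNormal A hA z
  haveI hni : IsStarNormal ((↑u⁻¹ : H →L[ℂ] H)) := by
    constructor
    have h2 : Commute ((star u : (H →L[ℂ] H)ˣ) : H →L[ℂ] H) ((u : H →L[ℂ] H)) :=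
      hna.star_comm_self
    have h3 := (h2.units_inv_left).units_inv_right
    have h4 : ((star u)⁻¹ : (H →L[ℂ] H)ˣ) = star (u⁻¹) := (star_inv u).symm
    rw [h4] at h3
    exact h3
  have hsr := IsStarNormal.spectralRadius_eq_nnnorm ((↑u⁻¹ : H →L[ℂ] H))
  set c : NNReal := ⟨d⁻¹, le_of_lt (inv_pos.2 hd)⟩ with hc
  have hspec : ∀ μ ∈ spectrum ℂ ((↑u⁻¹ : H →L[ℂ] H)), ‖μ‖₊ ≤ c := by
    intro μ hμ
    rw [← spectrum.map_inv] at hμ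
    rw [Set.mem_inv] at hμ
    rw [hu'] at hμ
    rw [← Algebra.algebraMap_eq_smul_one (R := ℂ), ← spectrum.sub_singleton_eq,
      Set.mem_sub] at hμ
    obtain ⟨ν, hν, y, hy, hνz⟩ := hμ
    rw [Set.mem_singleton_iff] at hy
    subst hy
    by_cases hμ0 : μ = 0
    · simp [hμ0]
    have hd' : d ≤ ‖μ⁻¹‖ := by
      rw [← hνz, ← norm_neg, neg_sub]
      exact hdist ν hν
    have : ‖μ‖ ≤ d⁻¹ := by
      rw [norm_inv] at hd'
      rw [← inv_inv ‖μ‖]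
      exact inv_anti₀ hd hd'
    exact this
  have hle : spectralRadius ℂ ((↑u⁻¹ : H →L[ℂ] H)) ≤ (c : ENNReal) := by
    rw [spectralRadius]
    exact iSup₂_le fun k hk => ENNReal.coe_le_coe.2 (hspec k hk)
  rw [hsr] at hle
  have : ‖(↑u⁻¹ : H →L[ℂ] H)‖₊ ≤ c := ENNReal.coe_le_coe.1 hle
  have hnorm : ‖(↑u⁻¹ : H →L[ℂ] H)‖ ≤ d⁻¹ := this
  rw [← hu', Ring.inverse_unit]
  exact hnorm

lemma aux_pert (A : H →L[ℂ] H) (hA : IsSelfAdjoint A) (z : ℂ) (B : H →L[ℂ] H) (d r : ℝ)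
    (hd : 0 < d) (hdist : ∀ μ ∈ spectrum ℂ A, d ≤ ‖z - μ‖) (hB : ‖B‖ ≤ r)
    (hr : 0 ≤ r) (hrd : r < d) :
    ‖Ring.inverse (A + B - z • (1 : H →L[ℂ] H))‖ ≤ (d - r)⁻¹ := by
  obtain ⟨hu, hbound⟩ := aux_resolvent A hA z d hd hdist
  obtain ⟨u, hu'⟩ := hu
  have hbound' : ‖(↑u⁻¹ : H →L[ℂ] H)‖ ≤ d⁻¹ := by
    rwa [← hu', Ring.inverse_unit] at hbound
  set w : H →L[ℂ] H := -((↑u⁻¹ : H →L[ℂ] H) * B) with hwdef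
  have hwle : ‖w‖ ≤ d⁻¹ * r := by
    rw [hwdef, norm_neg]
    exact (norm_mul_le _ _).trans (mul_le_mul hbound' hB (norm_nonneg _) (by positivity))
  have hw1 : ‖w‖ < 1 := by
    refine lt_of_le_of_lt hwle ?_
    rw [← inv_mul_cancel₀ (ne_of_gt hd)]
    exact mul_lt_mul_of_pos_left hrd (inv_pos.2 hd)
  set V : (H →L[ℂ] H)ˣ := Units.oneSub w hw1 with hVdef
  have hval : ((u * V : (H →L[ℂ] H)ˣ) : H →L[ℂ] H) = A + B - z • 1 := by
    have h1 : ((V : (H →L[ℂ] H)ˣ) : H →L[ℂ] H) = 1 - w := rfl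
    rw [Units.val_mul, h1, hwdef, hu']
    have h2 : (A - z • (1 : H →L[ℂ] H)) * (↑u⁻¹ : H →L[ℂ] H) = 1 := by
      rw [← hu']; exact u.mul_inv
    calc (A - z • (1:H →L[ℂ] H)) * (1 - -((↑u⁻¹ : H →L[ℂ] H) * B))
        = (A - z • 1) + ((A - z•(1:H →L[ℂ] H)) * (↑u⁻¹ : H →L[ℂ] H)) * B := by
          rw [mul_sub, mul_one, mul_neg, sub_neg_eq_add, mul_assoc]
      _ = (A - z • 1) + B := by rw [h2, one_mul]
      _ = A + B - z • 1 := by abel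
  have hVinv : ‖((V⁻¹ : (H →L[ℂ] H)ˣ) : H →L[ℂ] H)‖ ≤ (1 - ‖w‖)⁻¹ := by
    have h1 : ((V⁻¹ : (H →L[ℂ] H)ˣ) : H →L[ℂ] H) = ∑' n : ℕ, w ^ n := rfl
    rw [h1]
    refine (tsum_geometric_le_of_norm_lt_one w hw1).trans ?_
    have : ‖(1 : H →L[ℂ] H)‖ ≤ 1 := ContinuousLinearMap.norm_id_le
    linarith
  have hmain : ‖Ring.inverse (A + B - z • (1 : H →L[ℂ] H))‖ ≤ (1 - ‖w‖)⁻¹ * d⁻¹ := by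
    rw [← hval, Ring.inverse_unit, mul_inv_rev, Units.val_mul]
    exact (norm_mul_le _ _).trans (mul_le_mul hVinv hbound' (norm_nonneg _)
      (inv_nonneg.2 (by linarith)))
  refine hmain.trans ?_
  have hwd : d⁻¹ * r < 1 := by
    rw [← inv_mul_cancel₀ (ne_of_gt hd)]
    exact mul_lt_mul_of_pos_left hrd (inv_pos.2 hd)
  have h1w : 0 < 1 - d⁻¹ * r := by linarith
  have step1 : (1 - ‖w‖)⁻¹ ≤ (1 - d⁻¹ * r)⁻¹ := by
    apply inv_anti₀ h1w
    linarith
  have heq : (1 - d⁻¹ * r)⁻¹ * d⁻¹ = (d - r)⁻¹ := by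
    rw [← mul_inv]
    congr 1
    field_simp
  calc (1 - ‖w‖)⁻¹ * d⁻¹ ≤ (1 - d⁻¹ * r)⁻¹ * d⁻¹ :=
        mul_le_mul_of_nonneg_right step1 (by positivity)
    _ = (d - r)⁻¹ := heq

lemma aux_omega (A : H →L[ℂ] H) (hA : IsSelfAdjoint A) (c z : ℝ → ℂ)
    (Kt : ℝ → H →L[ℂ] H) (B₁ B₂ : H →L[ℂ] H) (d rr : ℝ) (g : ℝ → ℝ)
    (hd : 0 < d)
    (hdist : ∀ t ∈ Set.Icc (0:ℝ) 1, ∀ μ ∈ spectrum ℂ A, d ≤ ‖z t - μ‖)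
    (hB₁ : ‖B₁‖ ≤ rr) (hB₂ : ‖B₂‖ ≤ rr) (hrr : 0 ≤ rr) (hrd : rr < d)
    (hnorm : ∀ t ∈ Set.Icc (0:ℝ) 1, ‖c t‖ * ‖Kt t‖ ≤ g t)
    (hgi : IntervalIntegrable g MeasureTheory.volume 0 1) :
    ‖∫ t in (0:ℝ)..1, c t • (Ring.inverse (A + B₁ - z t • (1 : H →L[ℂ] H)) ∘L Kt t ∘L
        Ring.inverse (A + B₂ - z t • (1 : H →L[ℂ] H)))‖ ≤
      |∫ t in (0:ℝ)..1, (d - rr)⁻¹ * (d - rr)⁻¹ * g t| := by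
  have he : 0 < d - rr := by linarith
  refine intervalIntegral.norm_integral_le_abs_of_norm_le ?_ (hgi.const_mul _)
  refine (MeasureTheory.ae_restrict_mem measurableSet_uIoc).mono fun t ht => ?_
  have ht' : t ∈ Set.Icc (0:ℝ) 1 := by
    rw [Set.uIoc_of_le zero_le_one] at ht
    exact Set.Ioc_subset_Icc_self ht
  have hP := aux_pert A hA (z t) B₁ d rr hd (hdist t ht') hB₁ hrr hrd
  have hR := aux_pert A hA (z t) B₂ d rr hd (hdist t ht') hB₂ hrr hrd
  have h1 : ‖Kt t ∘L Ring.inverse (A + B₂ - z t • (1 : H →L[ℂ] H))‖ ≤ ‖Kt t‖ * (d - rr)⁻¹ :=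
    (ContinuousLinearMap.opNorm_comp_le _ _).trans
      (mul_le_mul_of_nonneg_left hR (norm_nonneg _))
  have h2 : ‖Ring.inverse (A + B₁ - z t • (1 : H →L[ℂ] H)) ∘L Kt t ∘L
      Ring.inverse (A + B₂ - z t • (1 : H →L[ℂ] H))‖ ≤ (d - rr)⁻¹ * (‖Kt t‖ * (d - rr)⁻¹) :=
    (ContinuousLinearMap.opNorm_comp_le _ _).trans
      (mul_le_mul hP h1 (norm_nonneg _) (inv_nonneg.2 he.le))
  rw [norm_smul]
  calc ‖c t‖ * ‖Ring.inverse (A + B₁ - z t • (1 : H →L[ℂ] H)) ∘L Kt t ∘L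
        Ring.inverse (A + B₂ - z t • (1 : H →L[ℂ] H))‖
      ≤ ‖c t‖ * ((d - rr)⁻¹ * (‖Kt t‖ * (d - rr)⁻¹)) :=
        mul_le_mul_of_nonneg_left h2 (norm_nonneg _)
    _ = (d - rr)⁻¹ * (d - rr)⁻¹ * (‖c t‖ * ‖Kt t‖) := by ring
    _ ≤ (d - rr)⁻¹ * (d - rr)⁻¹ * g t :=
        mul_le_mul_of_nonneg_left (hnorm t ht')
          (mul_nonneg (inv_nonneg.2 he.le) (inv_nonneg.2 he.le))

/-- `‖Ω⁻‖ < 1` and `‖Ω⁺‖ < 1`. -/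
theorem statement7
    (A : H →L[ℂ] H) (hA : IsSelfAdjoint A)
    (γ : ℝ → ℂ) (hγ : ContDiffOn ℝ 1 γ (Set.Icc 0 1))
    (hΓ : ∀ t ∈ Set.Icc (0:ℝ) 1, γ t ∉ spectrum ℂ A)
    (K : ℂ → H →L[ℂ] H) (hK : ContinuousOn (fun t => K (γ t)) (Set.Icc 0 1))
    (hKconj : ∀ μ : ℂ,
      (μ ∈ γ '' Set.Icc (0:ℝ) 1 ∨ (starRingEnd ℂ) μ ∈ γ '' Set.Icc (0:ℝ) 1) →
      K ((starRingEnd ℂ) μ) = ContinuousLinearMap.adjoint (K μ))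
    (hV : curveVar K γ < (curveDist A γ) ^ 2 / 4)
    (Xm Xp : H →L[ℂ] H)
    (hXmn : ‖Xm‖ ≤ rMin A K γ)
    (hXpn : ‖Xp‖ ≤ rMin A K (fun t => (starRingEnd ℂ) (γ t)))
    (hXmσ : Disjoint (spectrum ℂ (A + Xm)) (γ '' Set.Icc (0:ℝ) 1))
    (hXpσ : Disjoint (spectrum ℂ (A + Xp))
      ((fun t => (starRingEnd ℂ) (γ t)) '' Set.Icc (0:ℝ) 1))
    (hXm : Xm = Vmap K γ (A + Xm))
    (hXp : Xp = Vmap K (fun t => (starRingEnd ℂ) (γ t)) (A + Xp))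
    :
    ‖OmegaMinus K γ (A + Xm) (A + Xp)‖ < 1 ∧
    ‖OmegaPlus K γ (A + Xm) (A + Xp)‖ < 1 := by
  have hUD : UniqueDiffOn ℝ (Set.Icc (0:ℝ) 1) := uniqueDiffOn_Icc zero_lt_one
  set γ' : ℝ → ℂ := derivWithin γ (Set.Icc 0 1) with hγ'def
  have hγ'c : ContinuousOn γ' (Set.Icc 0 1) := hγ.continuousOn_derivWithin hUD le_rfl
  have hgc : ContinuousOn (fun t => ‖γ' t‖ * ‖K (γ t)‖) (Set.Icc 0 1) := hγ'c.norm.mul hK.norm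
  have hgi : IntervalIntegrable (fun t => ‖γ' t‖ * ‖K (γ t)‖) MeasureTheory.volume 0 1 :=
    ContinuousOn.intervalIntegrable (by rw [Set.uIcc_of_le (zero_le_one : (0:ℝ) ≤ 1)]; exact hgc)
  set d := curveDist A γ with hdd
  set Vv := curveVar K γ with hVv
  have hV0 : 0 ≤ Vv := by
    rw [hVv]; unfold curveVar
    exact intervalIntegral.integral_nonneg zero_le_one
      fun u hu => mul_nonneg (norm_nonneg _) (norm_nonneg _)
  haveI : Nonempty (Set.Icc (0:ℝ) 1) := (Set.nonempty_Icc.2 zero_le_one).to_subtype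
  have hd0 : 0 ≤ d := le_ciInf fun t => Metric.infDist_nonneg
  have hdpos : 0 < d := by nlinarith [hV, hV0]
  set s := Real.sqrt (d ^ 2 / 4 - Vv) with hsdef
  have hs2 : s ^ 2 = d ^ 2 / 4 - Vv := Real.sq_sqrt (by linarith)
  have hspos : 0 < s := Real.sqrt_pos.2 (by linarith)
  have hsle : s ≤ d / 2 := by
    have h1 : s ≤ Real.sqrt (d ^ 2 / 4) := Real.sqrt_le_sqrt (by linarith)
    have h2 : Real.sqrt (d ^ 2 / 4) = d / 2 := by
      rw [show d ^ 2 / 4 = (d / 2) ^ 2 by ring, Real.sqrt_sq (by linarith)]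
    linarith
  set rr := d / 2 - s with hrrdef
  have hrMin : rMin A K γ = rr := by
    unfold rMin; rw [← hdd, ← hVv, ← hsdef]
  have hrr0 : 0 ≤ rr := by rw [hrrdef]; linarith
  have hrrlt : rr < d / 2 := by rw [hrrdef]; linarith
  have hrrd : rr < d := by rw [hrrdef]; linarith
  have he : 0 < d - rr := by rw [hrrdef]; linarith
  have hVeq : rr * (d - rr) = Vv := by
    rw [hrrdef]; linear_combination -hs2
  have hreal : ∀ μ ∈ spectrum ℂ A, (starRingEnd ℂ) μ = μ := by
    intro μ hμ
    rw [hA.mem_spectrum_eq_re hμ]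
    exact Complex.conj_ofReal _
  have hdist : ∀ t ∈ Set.Icc (0:ℝ) 1, ∀ μ ∈ spectrum ℂ A, d ≤ ‖γ t - μ‖ := by
    intro t ht μ hμ
    have h1 : d ≤ Metric.infDist (γ t) (spectrum ℂ A) :=
      ciInf_le ⟨0, fun x ⟨i, hi⟩ => hi ▸ Metric.infDist_nonneg⟩ (⟨t, ht⟩ : Set.Icc (0:ℝ) 1)
    exact h1.trans (by rw [← dist_eq_norm]; exact Metric.infDist_le_dist_of_mem hμ)
  have hdistc : ∀ t ∈ Set.Icc (0:ℝ) 1, ∀ μ ∈ spectrum ℂ A,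
      d ≤ ‖(starRingEnd ℂ) (γ t) - μ‖ := by
    intro t ht μ hμ
    have e1 : (starRingEnd ℂ) (γ t) - μ = (starRingEnd ℂ) (γ t - μ) := by
      rw [map_sub, hreal μ hμ]
    rw [e1, RCLike.norm_conj]
    exact hdist t ht μ hμ
  have hderivc : ∀ t ∈ Set.Icc (0:ℝ) 1,
      derivWithin (fun u => (starRingEnd ℂ) (γ u)) (Set.Icc 0 1) t =
        (starRingEnd ℂ) (γ' t) := fun t ht => derivWithin.star
  have hcd : curveDist A (fun u => (starRingEnd ℂ) (γ u)) = d := by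
    rw [hdd]; unfold curveDist
    refine iInf_congr fun t => ?_
    rw [Metric.infDist_eq_iInf, Metric.infDist_eq_iInf]
    refine iInf_congr fun μ => ?_
    rw [dist_eq_norm, dist_eq_norm]
    have e1 : (starRingEnd ℂ) (γ t) - (μ : ℂ) = (starRingEnd ℂ) (γ t - (μ : ℂ)) := by
      rw [map_sub, hreal μ μ.2]
    rw [e1, RCLike.norm_conj]
  have hcv : curveVar K (fun u => (starRingEnd ℂ) (γ u)) = Vv := by
    rw [hVv]; unfold curveVar
    refine intervalIntegral.integral_congr fun t ht => ?_
    rw [Set.uIcc_of_le zero_le_one] at ht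
    rw [hderivc t ht, hKconj (γ t) (Or.inl ⟨t, ht, rfl⟩), RCLike.norm_conj,
      ← ContinuousLinearMap.star_eq_adjoint, norm_star]
  have hrMc : rMin A K (fun u => (starRingEnd ℂ) (γ u)) = rr := by
    unfold rMin; rw [hcd, hcv, ← hsdef]
  have hXm' : ‖Xm‖ ≤ rr := hrMin ▸ hXmn
  have hXp' : ‖Xp‖ ≤ rr := hrMc ▸ hXpn
  have hXms : ‖star Xm‖ ≤ rr := by rwa [norm_star]
  have hXps : ‖star Xp‖ ≤ rr := by rwa [norm_star]
  have hadjm : ContinuousLinearMap.adjoint (A + Xm) = A + star Xm := by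
    rw [← ContinuousLinearMap.star_eq_adjoint, star_add, hA.star_eq]
  have hadjp : ContinuousLinearMap.adjoint (A + Xp) = A + star Xp := by
    rw [← ContinuousLinearMap.star_eq_adjoint, star_add, hA.star_eq]
  have hfin : |∫ t in (0:ℝ)..1, (d - rr)⁻¹ * (d - rr)⁻¹ * (‖γ' t‖ * ‖K (γ t)‖)| < 1 := by
    rw [intervalIntegral.integral_const_mul]
    have hiv : ∫ t in (0:ℝ)..1, ‖γ' t‖ * ‖K (γ t)‖ = Vv := by rw [hVv]; rfl
    rw [hiv, abs_of_nonneg (mul_nonneg (mul_nonneg (inv_nonneg.2 he.le) (inv_nonneg.2 he.le))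
      hV0), ← hVeq,
      show (d - rr)⁻¹ * (d - rr)⁻¹ * (rr * (d - rr)) = rr / (d - rr) by
        field_simp,
      div_lt_one he]
    rw [hrrdef]
    linarith
  constructor
  · have h := aux_omega A hA γ' γ (fun t => K (γ t)) (star Xp) Xm d rr
      (fun t => ‖γ' t‖ * ‖K (γ t)‖) hdpos hdist hXps hXm' hrr0 hrrd
      (fun t ht => le_rfl) hgi
    unfold OmegaMinus
    rw [hadjp]
    exact lt_of_le_of_lt h hfin
  · have h := aux_omega A hA (fun t => (starRingEnd ℂ) (γ' t))
      (fun t => (starRingEnd ℂ) (γ t)) (fun t => K ((starRingEnd ℂ) (γ t)))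
      (star Xm) Xp d rr (fun t => ‖γ' t‖ * ‖K (γ t)‖) hdpos hdistc hXms hXp' hrr0 hrrd
      (fun t ht => by
        show ‖(starRingEnd ℂ) (γ' t)‖ * ‖K ((starRingEnd ℂ) (γ t))‖ ≤ ‖γ' t‖ * ‖K (γ t)‖
        rw [RCLike.norm_conj, hKconj (γ t) (Or.inl ⟨t, ht, rfl⟩),
          ← ContinuousLinearMap.star_eq_adjoint, norm_star]) hgi
    unfold OmegaPlus
    rw [hadjm]
    exact lt_of_le_of_lt h hfin


end
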